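/- arXiv:1206.2364 — 3 statements merged into one kernel-verified Lean document; each statement's English description precedes it below -/
import Mathlib

section
/- Let X be a real vector space, let W be an ordered real vector space (an ordered additive group that is an ordered module over ℝ, with positive cone W₊ = {w ∈ W | 0 ≤ w}), and let Y be a Dedekind complete vector lattice (a lattice-ordered real vector space, with the order compatible with addition and multiplication by nonnegative scalars, in which every nonempty subset bounded above has a least upper bound). Let A : X → W and B : X → Y be linear maps, and assume that A(X) − W₊ = W₊ − A(X) = W, i.e., for every w ∈ W there exist x, x′ ∈ X with A x′ ≤ w ≤ A x. Then there exists a positive (monotone) linear operator 𝔛 : W → Y with 𝔛 ∘ A = B if and only if {x ∈ X | A x ≤ 0} ⊆ {x ∈ X | B x ≤ 0}. -/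
open Set LinearMap

section KantorovichAux

variable {E Y : Type*} [AddCommGroup E] [Module ℝ E]
  [Lattice Y] [AddCommGroup Y] [CovariantClass Y Y (· + ·) (· ≤ ·)] [Module ℝ Y]

private theorem kant_smul_le_smul (hsmul : ∀ (t : ℝ) (y : Y), 0 ≤ t → 0 ≤ y → 0 ≤ t • y)
    {t : ℝ} (ht : 0 ≤ t) {a b : Y} (h : a ≤ b) : t • a ≤ t • b := by
  have := hsmul t (b - a) ht (sub_nonneg.2 h)
  rw [smul_sub] at this
  exact sub_nonneg.1 this

private theorem kant_rearr {a b c d : Y} (h : a + b ≤ c + d) : a - c ≤ d - b := by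
  have h1 : a ≤ c + d - b := le_sub_iff_add_le.2 h
  calc a - c ≤ c + d - b - c := sub_le_sub_right h1 c
    _ = d - b := by abel

/-- Hahn–Banach–Kantorovich: one-step extension. -/
private theorem kant_hb_step
    (hsmul : ∀ (t : ℝ) (y : Y), 0 ≤ t → 0 ≤ y → 0 ≤ t • y)
    (hDedekind : ∀ S : Set Y, S.Nonempty → BddAbove S → ∃ y : Y, IsLUB S y)
    (p : E → Y) (p_add : ∀ u v, p (u + v) ≤ p u + p v)
    (p_smul : ∀ t : ℝ, 0 < t → ∀ u, p (t • u) = t • p u)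
    (f : E →ₗ.[ℝ] Y) (hf : ∀ x : f.domain, f x ≤ p x) (hdom : f.domain ≠ ⊤) :
    ∃ g, f < g ∧ ∀ x : g.domain, g x ≤ p x := by
  obtain ⟨y, -, hy⟩ : ∃ y ∈ ⊤, y ∉ f.domain := SetLike.exists_of_lt (lt_top_iff_ne_top.2 hdom)
  obtain ⟨c, hcU, hcL⟩ :
      ∃ c : Y, (∀ x : f.domain, f x - c ≤ p ((x : E) - y)) ∧
        ∀ x : f.domain, f x + c ≤ p ((x : E) + y) := by
    have hub : ∀ x x' : f.domain, f x - p ((x : E) - y) ≤ p ((x' : E) + y) - f x' := by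
      intro x x'
      refine kant_rearr ?_
      rw [← f.map_add]
      refine (hf (x + x')).trans ?_
      have := p_add ((x : E) - y) ((x' : E) + y)
      rwa [show (x : E) - y + ((x' : E) + y) = ((x + x' : f.domain) : E) by
        push_cast; abel] at this
    obtain ⟨c, hc⟩ := hDedekind (range fun x : f.domain => f x - p ((x : E) - y))
      (range_nonempty _) ⟨p (((0 : f.domain) : E) + y) - f 0, by
        rintro a ⟨x, rfl⟩; exact hub x 0⟩
    refine ⟨c, fun x => ?_, fun x' => ?_⟩
    · exact sub_le_comm.1 (hc.1 (mem_range_self x))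
    · have : c ≤ p ((x' : E) + y) - f x' := hc.2 (by rintro a ⟨x, rfl⟩; exact hub x x')
      rw [add_comm]
      exact le_sub_iff_add_le.1 this
  refine ⟨f.supSpanSingleton y c hy, ?_, ?_⟩
  · refine lt_iff_le_not_ge.2 ⟨f.left_le_sup _ _, fun H => ?_⟩
    replace H := LinearPMap.domain_mono.monotone H
    rw [LinearPMap.domain_supSpanSingleton, sup_le_iff, Submodule.span_le,
      singleton_subset_iff] at H
    exact hy H.2
  · rintro ⟨z, hz⟩
    rcases Submodule.mem_sup.1 hz with ⟨x, hx, y', hy', rfl⟩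
    rcases Submodule.mem_span_singleton.1 hy' with ⟨r, rfl⟩
    simp only [Subtype.coe_mk]
    rw [LinearPMap.supSpanSingleton_apply_mk _ _ _ _ _ hx]
    rcases lt_trichotomy r 0 with hr | hr | hr
    · set s : ℝ := -r with hs
      have hspos : 0 < s := neg_pos.2 hr
      set x₁ : f.domain := ⟨s⁻¹ • x, f.domain.smul_mem _ hx⟩ with hx₁def
      have key : f x₁ - c ≤ p ((x₁ : E) - y) := hcU x₁
      have h2 := kant_smul_le_smul hsmul hspos.le key
      rw [smul_sub, ← f.map_smul] at h2
      have hx₁ : s • x₁ = ⟨x, hx⟩ := Subtype.ext (by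
        simp [hx₁def, smul_smul, mul_inv_cancel₀ hspos.ne'])
      rw [hx₁, ← p_smul s hspos] at h2
      have e1 : s • ((x₁ : E) - y) = x + r • y := by
        rw [hx₁def]
        simp only [smul_sub, smul_smul, mul_inv_cancel₀ hspos.ne', one_smul]
        rw [hs, neg_smul, sub_neg_eq_add]
      rw [e1] at h2
      rwa [hs, neg_smul, sub_neg_eq_add] at h2
    · subst hr
      simpa using hf ⟨x, hx⟩
    · set x₁ : f.domain := ⟨r⁻¹ • x, f.domain.smul_mem _ hx⟩ with hx₁def
      have key : f x₁ + c ≤ p ((x₁ : E) + y) := hcL x₁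
      have h2 := kant_smul_le_smul hsmul hr.le key
      rw [smul_add, ← f.map_smul] at h2
      have hx₁ : r • x₁ = ⟨x, hx⟩ := Subtype.ext (by
        simp [hx₁def, smul_smul, mul_inv_cancel₀ hr.ne'])
      rw [hx₁, ← p_smul r hr] at h2
      have e1 : r • ((x₁ : E) + y) = x + r • y := by
        rw [hx₁def]
        simp only [smul_add, smul_smul, mul_inv_cancel₀ hr.ne', one_smul]
      rwa [e1] at h2

private theorem kant_hb_exists_top
    (hsmul : ∀ (t : ℝ) (y : Y), 0 ≤ t → 0 ≤ y → 0 ≤ t • y)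
    (hDedekind : ∀ S : Set Y, S.Nonempty → BddAbove S → ∃ y : Y, IsLUB S y)
    (p : E → Y) (p_add : ∀ u v, p (u + v) ≤ p u + p v)
    (p_smul : ∀ t : ℝ, 0 < t → ∀ u, p (t • u) = t • p u)
    (f : E →ₗ.[ℝ] Y) (hf : ∀ x : f.domain, f x ≤ p x) :
    ∃ q ≥ f, q.domain = ⊤ ∧ ∀ x : q.domain, q x ≤ p x := by
  set S := { g : E →ₗ.[ℝ] Y | ∀ x : g.domain, g x ≤ p x }
  have hSc : ∀ c, c ⊆ S → IsChain (· ≤ ·) c → ∀ y ∈ c, ∃ ub ∈ S, ∀ z ∈ c, z ≤ ub := by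
    intro c hcs c_chain y hy
    have cne : c.Nonempty := ⟨y, hy⟩
    have hcd : DirectedOn (· ≤ ·) c := c_chain.directedOn
    refine ⟨LinearPMap.sSup c hcd, ?_, fun _ => LinearPMap.le_sSup hcd⟩
    rintro ⟨x, hx⟩
    have hdir : DirectedOn (· ≤ ·) (LinearPMap.domain '' c) :=
      directedOn_image.2 (hcd.mono LinearPMap.domain_mono.monotone)
    rcases (Submodule.mem_sSup_of_directed (cne.image _) hdir).1 hx with ⟨_, ⟨g, hgc, rfl⟩, hgx⟩
    have hle : g ≤ LinearPMap.sSup c hcd := LinearPMap.le_sSup _ hgc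
    calc LinearPMap.sSup c hcd ⟨x, hx⟩ = g ⟨x, hgx⟩ := (hle.2 rfl).symm
      _ ≤ p x := hcs hgc ⟨x, hgx⟩
  obtain ⟨q, hpq, hqs, hq⟩ := zorn_le_nonempty₀ S hSc f hf
  refine ⟨q, hpq, ?_, hqs⟩
  contrapose! hq
  rcases kant_hb_step hsmul hDedekind p p_add p_smul q hqs hq with ⟨r, hqr, hr⟩
  exact ⟨r, hr, hqr.le, fun hrq => hqr.ne' <| hrq.antisymm hqr.le⟩

/-- Hahn–Banach–Kantorovich theorem: a linear map into a Dedekind complete vector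
lattice dominated by a sublinear map extends to the whole space. -/
private theorem kant_hb
    (hsmul : ∀ (t : ℝ) (y : Y), 0 ≤ t → 0 ≤ y → 0 ≤ t • y)
    (hDedekind : ∀ S : Set Y, S.Nonempty → BddAbove S → ∃ y : Y, IsLUB S y)
    (p : E → Y) (p_add : ∀ u v, p (u + v) ≤ p u + p v)
    (p_smul : ∀ t : ℝ, 0 < t → ∀ u, p (t • u) = t • p u)
    (f : E →ₗ.[ℝ] Y) (hf : ∀ x : f.domain, f x ≤ p x) :
    ∃ g : E →ₗ[ℝ] Y, (∀ x : f.domain, g x = f x) ∧ ∀ w, g w ≤ p w := by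
  rcases kant_hb_exists_top hsmul hDedekind p p_add p_smul f hf
    with ⟨⟨g_dom, g⟩, ⟨-, hfg⟩, rfl : g_dom = ⊤, hg⟩
  refine ⟨g.comp (LinearMap.id.codRestrict ⊤ fun _ => trivial), fun x => (hfg rfl).symm,
    fun w => hg ⟨w, trivial⟩⟩

end KantorovichAux

/-- Kantorovich's Theorem, part (2): with `W` an ordered vector space and `Y` a
Dedekind complete vector lattice (Kantorovich space), if `A(X) - W₊ = W₊ - A(X) = W`
then a positive linear operator `𝔛 : W → Y` with `𝔛 ∘ A = B` exists if and only if
`{A ≤ 0} ⊆ {B ≤ 0}`. -/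
theorem kantorovich_positive_factorization
    {X W Y : Type*} [AddCommGroup X] [Module ℝ X]
    [AddCommGroup W] [PartialOrder W] [IsOrderedAddMonoid W] [Module ℝ W] [PosSMulStrictMono ℝ W]
    [Lattice Y] [AddCommGroup Y] [CovariantClass Y Y (· + ·) (· ≤ ·)] [Module ℝ Y]
    (hsmul : ∀ (t : ℝ) (y : Y), 0 ≤ t → 0 ≤ y → 0 ≤ t • y)
    (hDedekind : ∀ S : Set Y, S.Nonempty → BddAbove S → ∃ y : Y, IsLUB S y)
    (A : X →ₗ[ℝ] W) (B : X →ₗ[ℝ] Y)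
    (hA : ∀ w : W, ∃ x x' : X, A x' ≤ w ∧ w ≤ A x) :
    (∃ 𝔛 : W →ₗ[ℝ] Y, (∀ w : W, 0 ≤ w → 0 ≤ 𝔛 w) ∧ 𝔛 ∘ₗ A = B) ↔
      {x : X | A x ≤ 0} ⊆ {x : X | B x ≤ 0} := by
  constructor
  · rintro ⟨T, hpos, hcomp⟩ x hx
    have hBx : B x = T (A x) := by
      rw [← hcomp]; rfl
    have h1 : (0 : W) ≤ -(A x) := neg_nonneg.2 hx
    have h2 := hpos _ h1
    rw [map_neg] at h2
    have : T (A x) ≤ 0 := by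
      have := neg_le_neg_iff.2 h2
      simpa using this
    show B x ≤ 0
    rw [hBx]
    exact this
  · intro hBA
    -- monotonicity of B along A
    have hmono : ∀ x x' : X, A x ≤ A x' → B x ≤ B x' := by
      intro x x' h
      have h1 : A (x - x') ≤ 0 := by rw [map_sub]; exact sub_nonpos.2 h
      have h2 : B (x - x') ≤ 0 := hBA h1
      rw [map_sub] at h2
      exact sub_nonpos.1 h2
    -- the sublinear majorant p w = inf {B x | w ≤ A x}
    have hglb : ∀ w : W, ∃ y : Y, IsGLB {z : Y | ∃ x : X, w ≤ A x ∧ z = B x} y := by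
      intro w
      obtain ⟨xu, xl, hl, hu⟩ := hA w
      obtain ⟨m, hm⟩ := hDedekind (Neg.neg '' {z : Y | ∃ x : X, w ≤ A x ∧ z = B x})
        ⟨-(B xu), _, ⟨xu, hu, rfl⟩, rfl⟩
        ⟨-(B xl), by
          rintro a ⟨z, ⟨x, hwx, rfl⟩, rfl⟩
          exact neg_le_neg_iff.2 (hmono xl x (hl.trans hwx))⟩
      refine ⟨-m, ?_, ?_⟩
      · rintro z ⟨x, hwx, rfl⟩
        have : -(B x) ≤ m := hm.1 ⟨B x, ⟨x, hwx, rfl⟩, rfl⟩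
        simpa using neg_le_neg_iff.2 this
      · intro z hz
        have : m ≤ -z := hm.2 (by
          rintro a ⟨u, hu', rfl⟩
          exact neg_le_neg_iff.2 (hz hu'))
        simpa using neg_le_neg_iff.2 this
    set p : W → Y := fun w => Classical.choose (hglb w) with hpdef
    have hp : ∀ w, IsGLB {z : Y | ∃ x : X, w ≤ A x ∧ z = B x} (p w) :=
      fun w => Classical.choose_spec (hglb w)
    have hp_le : ∀ (w : W) (x : X), w ≤ A x → p w ≤ B x :=
      fun w x h => (hp w).1 ⟨x, h, rfl⟩
    have hp_ge : ∀ (w : W) (z : Y), (∀ x : X, w ≤ A x → z ≤ B x) → z ≤ p w := by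
      intro w z h
      refine (hp w).2 ?_
      rintro a ⟨x, hx, rfl⟩
      exact h x hx
    have p_add : ∀ u v, p (u + v) ≤ p u + p v := by
      intro u v
      rw [← sub_le_iff_le_add']
      refine hp_ge v _ ?_
      intro x' hvx'
      rw [sub_le_comm]
      refine hp_ge u _ ?_
      intro x hux
      rw [sub_le_iff_le_add]
      have : p (u + v) ≤ B (x + x') := hp_le _ _ (by rw [map_add]; exact add_le_add hux hvx')
      rwa [map_add] at this
    have p_smul : ∀ t : ℝ, 0 < t → ∀ u, p (t • u) = t • p u := by
      intro t ht u
      refine ((hp (t • u)).unique ?_ : p (t • u) = t • p u)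
      constructor
      · rintro z ⟨x, hwx, rfl⟩
        have h1 : u ≤ A (t⁻¹ • x) := by
          rw [map_smul]
          have := smul_le_smul_of_nonneg_left hwx (inv_nonneg.2 ht.le)
          rwa [smul_smul, inv_mul_cancel₀ ht.ne', one_smul] at this
        have h2 : p u ≤ B (t⁻¹ • x) := hp_le _ _ h1
        have h3 := kant_smul_le_smul hsmul ht.le h2
        rwa [map_smul, smul_smul, mul_inv_cancel₀ ht.ne', one_smul] at h3
      · intro z hz
        have h1 : t⁻¹ • z ≤ p u := by
          refine hp_ge u _ ?_
          intro x hux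
          have h2 : t • u ≤ A (t • x) := by
            rw [map_smul]
            exact smul_le_smul_of_nonneg_left hux ht.le
          have h3 : z ≤ B (t • x) := hz ⟨t • x, h2, rfl⟩
          have h4 := kant_smul_le_smul hsmul (inv_nonneg.2 ht.le) h3
          rwa [map_smul, smul_smul, inv_mul_cancel₀ ht.ne', one_smul] at h4
        have := kant_smul_le_smul hsmul ht.le h1
        rwa [smul_smul, mul_inv_cancel₀ ht.ne', one_smul] at this
    -- B = p ∘ A on the range of A, since p (A x) = B x
    have hpA : ∀ x : X, p (A x) = B x := by
      intro x
      refine le_antisymm (hp_le _ _ le_rfl) (hp_ge _ _ fun x' h => hmono x x' h)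
    -- the partial linear map on range A
    have hker : LinearMap.ker A ≤ LinearMap.ker B := by
      intro x hx
      rw [LinearMap.mem_ker] at hx ⊢
      have h1 : B x ≤ 0 := hBA (show A x ≤ 0 from le_of_eq hx)
      have h2 : B (-x) ≤ 0 := hBA (show A (-x) ≤ 0 by rw [map_neg, hx, neg_zero])
      rw [map_neg, neg_nonpos] at h2
      exact le_antisymm h1 h2
    set f0 : LinearMap.range A →ₗ[ℝ] Y :=
      ((LinearMap.ker A).liftQ B hker).comp
        (A.quotKerEquivRange.symm.toLinearMap) with hf0def
    have hf0 : ∀ x : X, f0 ⟨A x, LinearMap.mem_range_self A x⟩ = B x := by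
      intro x
      have h1 : A.quotKerEquivRange (Submodule.Quotient.mk x) =
          ⟨A x, LinearMap.mem_range_self A x⟩ := by
        apply Subtype.ext
        simp [LinearMap.quotKerEquivRange]
      have h2 : A.quotKerEquivRange.symm ⟨A x, LinearMap.mem_range_self A x⟩ =
          Submodule.Quotient.mk x := by
        rw [LinearEquiv.symm_apply_eq, h1]
      rw [hf0def]
      simp only [LinearMap.comp_apply, LinearEquiv.coe_coe, h2, Submodule.liftQ_apply]
    set f : W →ₗ.[ℝ] Y := ⟨LinearMap.range A, f0⟩ with hfdef
    have hf : ∀ v : f.domain, f v ≤ p v := by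
      rintro ⟨v, hv⟩
      obtain ⟨x, rfl⟩ := hv
      show f0 ⟨A x, LinearMap.mem_range_self A x⟩ ≤ p (A x)
      rw [hf0, hpA]
    obtain ⟨g, hg_eq, hg_le⟩ := kant_hb hsmul hDedekind p p_add p_smul f hf
    refine ⟨g, ?_, ?_⟩
    · intro w hw
      have h1 : g (-w) ≤ p (-w) := hg_le (-w)
      have h2 : p (-w) ≤ B 0 := hp_le _ 0 (by rw [map_zero]; exact neg_nonpos.2 hw)
      rw [map_zero] at h2
      rw [map_neg] at h1
      have := h1.trans h2
      simpa using neg_le_neg_iff.2 this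
    · ext x
      have h1 : g (A x) = f ⟨A x, LinearMap.mem_range_self A x⟩ :=
        hg_eq ⟨A x, LinearMap.mem_range_self A x⟩
      have h2 : f ⟨A x, LinearMap.mem_range_self A x⟩ =
          f0 ⟨A x, LinearMap.mem_range_self A x⟩ := rfl
      simp only [LinearMap.comp_apply]
      rw [h1, h2, hf0]
end

section
/- Let X be a set, let Y be a topological space, let F : X → Set Y be a correspondence, and let 𝒩 be a filter on X. Let the grill of 𝒩 be the family of all subsets A of X such that A ∩ U is nonempty for every U ∈ 𝒩. Then ⋂_{A ∈ grill(𝒩)} closure(⋃_{x ∈ A} F(x)) = {y ∈ Y | for every neighborhood V of y, the set {x ∈ X | F(x) ∩ V is nonempty} belongs to 𝒩}. -/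
/-- The Kuratowski–Painlevé limit inferior (the `∀∃`-limit) of a correspondence
`F` along a filter `𝒩` equals the intersection over all members `A` of the
grill of `𝒩` of `closure (⋃_{x ∈ A} F x)`. -/
theorem liminf_correspondence
    {X Y : Type*} [TopologicalSpace Y] (F : X → Set Y) (𝒩 : Filter X) :
    ⋂ A ∈ {A : Set X | ∀ U ∈ 𝒩, (A ∩ U).Nonempty}, closure (⋃ x ∈ A, F x) =
      {y : Y | ∀ V ∈ nhds y, {x : X | (F x ∩ V).Nonempty} ∈ 𝒩} := by
  ext y
  simp only [Set.mem_iInter, Set.mem_setOf_eq]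
  constructor
  · intro h V hV
    by_contra hU
    have hA : {x : X | (F x ∩ V).Nonempty}ᶜ ∈ {A : Set X | ∀ U ∈ 𝒩, (A ∩ U).Nonempty} := by
      intro W hW
      by_contra hne
      rw [Set.not_nonempty_iff_eq_empty] at hne
      exact hU (𝒩.mem_of_superset hW (fun x hx => by
        by_contra hx'
        exact Set.eq_empty_iff_forall_notMem.mp hne x ⟨hx', hx⟩))
    have := h _ hA
    rcases mem_closure_iff_nhds.mp this V hV with ⟨z, hzV, hz⟩
    simp only [Set.mem_iUnion] at hz
    rcases hz with ⟨x, hx, hzx⟩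
    exact hx ⟨z, hzx, hzV⟩
  · intro h A hA
    rw [mem_closure_iff_nhds]
    intro V hV
    rcases hA _ (h V hV) with ⟨x, hxA, hx⟩
    rcases hx with ⟨z, hzF, hzV⟩
    exact ⟨z, hzV, Set.mem_iUnion₂.mpr ⟨x, hxA, hzF⟩⟩
end

section
/- Let X be a real vector space, let f, g : X → ℝ be convex functions, and let ε ≥ 0 and δ ≥ 0 be real numbers. Let h : X → ℝ be the infimal convolution of f and g, i.e., for every x ∈ X, h(x) = inf{f(u) + g(v) | u, v ∈ X, u + v = x} and this infimum is a real number (h(x) ≤ f(u) + g(v) whenever u + v = x, and h(x) is the greatest such lower bound). Fix x̄, ȳ ∈ X and assume the convolution is δ-exact at (x̄, ȳ), i.e., h(x̄) + δ = f(ȳ) + g(x̄ − ȳ). Then for every linear functional l : X → ℝ, l belongs to the ε-subdifferential ∂_ε h(x̄) if and only if there exist real numbers ε₁ ≥ 0 and ε₂ ≥ 0 with ε₁ + ε₂ = ε + δ such that l ∈ ∂_{ε₁} f(ȳ) and l ∈ ∂_{ε₂} g(x̄ − ȳ). -/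
/-- Scalar case of Theorem 3: ε-subdifferential of a δ-exact infimal convolution.
If `h` is the (real-valued) infimal convolution of the convex functions `f` and `g`,
and it is δ-exact at `(xb, yb)`, then `l ∈ ∂_ε h(xb)` iff `l ∈ ∂_{ε₁} f(yb)` and
`l ∈ ∂_{ε₂} g(xb - yb)` for some `ε₁, ε₂ ≥ 0` with `ε₁ + ε₂ = ε + δ`. -/
theorem eps_subdifferential_of_convolution
    {X : Type*} [AddCommGroup X] [Module ℝ X]
    (f g h : X → ℝ) (hf : ConvexOn ℝ Set.univ f) (hg : ConvexOn ℝ Set.univ g)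
    (ε δ : ℝ) (hε : 0 ≤ ε) (hδ : 0 ≤ δ)
    (hh : ∀ x : X, IsGLB {r : ℝ | ∃ u v : X, u + v = x ∧ r = f u + g v} (h x))
    (xb yb : X) (hexact : h xb + δ = f yb + g (xb - yb)) :
    ∀ l : X →ₗ[ℝ] ℝ,
      (∀ x : X, l x - h x ≤ l xb - h xb + ε) ↔
        ∃ ε₁ ε₂ : ℝ, 0 ≤ ε₁ ∧ 0 ≤ ε₂ ∧ ε₁ + ε₂ = ε + δ ∧
          (∀ x : X, l x - f x ≤ l yb - f yb + ε₁) ∧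
          (∀ x : X, l x - g x ≤ l (xb - yb) - g (xb - yb) + ε₂) := by
  -- key inequality: h (u+v) ≤ f u + g v
  have hkey : ∀ u v : X, h (u + v) ≤ f u + g v := fun u v =>
    (hh (u + v)).1 ⟨u, v, rfl, rfl⟩
  intro l
  constructor
  · intro hl
    set S : Set ℝ := Set.range (fun x => l x - f x) with hS
    have hne : S.Nonempty := ⟨l yb - f yb, yb, rfl⟩
    -- any x gives an upper bound for S
    have hub : ∀ x u : X, l u - f u ≤ (l xb - h xb + ε) - (l x - g x) := by
      intro x u
      have h1 := hkey u x
      have h2 := hl (u + x)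
      have h3 : l (u + x) = l u + l x := map_add l u x
      linarith
    have hbdd : BddAbove S := by
      refine ⟨(l xb - h xb + ε) - (l yb - g yb), ?_⟩
      rintro r ⟨u, rfl⟩
      exact hub yb u
    set A := sSup S with hA
    have hAle : ∀ x : X, l x - f x ≤ A := fun x => le_csSup hbdd ⟨x, rfl⟩
    have hAub : ∀ x : X, A ≤ (l xb - h xb + ε) - (l x - g x) := fun x =>
      csSup_le hne (by rintro r ⟨u, rfl⟩; exact hub x u)
    have hsub : l (xb - yb) = l xb - l yb := map_sub l xb yb
    refine ⟨A - (l yb - f yb), ε + δ - (A - (l yb - f yb)), ?_, ?_, by ring, ?_, ?_⟩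
    · have := hAle yb; linarith
    · have := hAub (xb - yb); linarith
    · intro x; have := hAle x; linarith
    · intro x; have := hAub x; linarith
  · rintro ⟨ε₁, ε₂, hε₁, hε₂, hsum, hF, hG⟩ x
    have hlb : (l x - (l xb - h xb + ε)) ∈ lowerBounds
        {r : ℝ | ∃ u v : X, u + v = x ∧ r = f u + g v} := by
      rintro r ⟨u, v, huv, rfl⟩
      have h1 := hF u
      have h2 := hG v
      have h3 : l u + l v = l x := by rw [← map_add, huv]
      have h4 : l (xb - yb) = l xb - l yb := map_sub l xb yb
      linarith
    have := (hh x).2 hlb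
    linarith
end
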